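/- Let X ≠ 0 and L be finite-dimensional ℚ-vector spaces, let M_0, M_1, M ∈ A, and suppose there is an exact sequence 0 → M_0 ⊗_ℚ X → M → M_1 ⊗_ℚ L → 0 in A. Let M̃ be the pushout of the exact sequence 0 → M_0 ⊗_ℚ X ⊗_ℚ X^∨ → M ⊗_ℚ X^∨ → M_1 ⊗_ℚ L ⊗_ℚ X^∨ → 0 along the map M_0 ⊗_ℚ X ⊗_ℚ X^∨ → M_0 induced by the trace tr : Hom(X, X) ≅ X ⊗ X^∨ → ℚ, so that M̃ fits into an exact sequence 0 → M_0 → M̃ → M_1 ⊗_ℚ Hom(X, L) → 0. Then P(M) = P(M̃) as subspaces of P(A). -/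

import Mathlib

set_option maxHeartbeats 1000000
set_option synthInstance.maxHeartbeats 400000

open CategoryTheory CategoryTheory.Limits Module TensorProduct

universe v u

attribute [local instance] CategoryTheory.Abelian.hasFiniteBiproducts

/-- A fiber functor on a `ℚ`-linear Abelian category, defined over a field `F ⊇ ℚ`:
a `ℚ`-linear, exact, faithful functor into finite-dimensional `F`-vector spaces. -/
structure FiberFunctor (A : Type u) [Category.{v} A] [Abelian A] [CategoryTheory.Linear ℚ A]
    (F : Type) [Field F] [Algebra ℚ F] where
  H : A ⥤ ModuleCat.{0} F
  additive : H.Additive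
  linear : ∀ (q : ℚ) {M N : A} (f : M ⟶ N), H.map (q • f) = (algebraMap ℚ F q) • H.map f
  exact_left : Limits.PreservesFiniteLimits H
  exact_right : Limits.PreservesFiniteColimits H
  faithful : H.Faithful
  finDim : ∀ M : A, FiniteDimensional F (H.obj M)

variable (A : Type u) [Category.{v} A] [Abelian A] [CategoryTheory.Linear ℚ A]
variable (K : Subfield ℂ)
variable (HB : FiberFunctor A ℚ) (HdR : FiberFunctor A ↥K)

/-- The index type of the free module on symbols `(M, σ, ω)`. -/
abbrev PIdx := Σ M : A, (HB.H.obj M) × Module.Dual ↥K (HdR.H.obj M)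

/-- The free `K`-module on symbols `(M, σ, ω)`. -/
abbrev FreeMod := PIdx A K HB HdR →₀ ↥K

/-- Generators of the relations defining `P(A)` as a quotient of the free `K`-module on
symbols `(σ ⊗ ω)_M`: bilinearity relations (making the quotient by them the direct sum
`⊕_M H_B(M) ⊗_ℚ H_dR(M)^∨`) together with the period relations
`(σ ⊗ α^∨(ω))_M = (α(σ) ⊗ ω)_N` for morphisms `α : M ⟶ N`. -/
def RelGen (x : FreeMod A K HB HdR) : Prop :=
  (∃ (M : A) (σ σ' : HB.H.obj M) (ω : Module.Dual ↥K (HdR.H.obj M)),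
      x = Finsupp.single ⟨M, (σ + σ', ω)⟩ 1 - Finsupp.single ⟨M, (σ, ω)⟩ 1
            - Finsupp.single ⟨M, (σ', ω)⟩ 1) ∨
  (∃ (M : A) (σ : HB.H.obj M) (ω ω' : Module.Dual ↥K (HdR.H.obj M)),
      x = Finsupp.single ⟨M, (σ, ω + ω')⟩ 1 - Finsupp.single ⟨M, (σ, ω)⟩ 1
            - Finsupp.single ⟨M, (σ, ω')⟩ 1) ∨
  (∃ (M : A) (q : ℚ) (σ : HB.H.obj M) (ω : Module.Dual ↥K (HdR.H.obj M)),
      x = Finsupp.single ⟨M, (q • σ, ω)⟩ 1 - Finsupp.single ⟨M, (σ, ω)⟩ (algebraMap ℚ ↥K q)) ∨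
  (∃ (M : A) (c : ↥K) (σ : HB.H.obj M) (ω : Module.Dual ↥K (HdR.H.obj M)),
      x = Finsupp.single ⟨M, (σ, c • ω)⟩ 1 - Finsupp.single ⟨M, (σ, ω)⟩ c) ∨
  (∃ (M N : A) (α : M ⟶ N) (σ : HB.H.obj M) (ω : Module.Dual ↥K (HdR.H.obj N)),
      x = Finsupp.single ⟨M, (σ, ω.comp (HdR.H.map α).hom)⟩ 1
            - Finsupp.single ⟨N, (HB.H.map α σ, ω)⟩ 1)

/-- The submodule of relations defining `P(A)`. -/
noncomputable def PRel : Submodule ↥K (FreeMod A K HB HdR) :=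
  Submodule.span ↥K {x | RelGen A K HB HdR x}

/-- The space of formal periods `P(A)`. -/
abbrev PA := FreeMod A K HB HdR ⧸ PRel A K HB HdR

/-- The class of the formal period `(σ ⊗ ω)_M` in `P(A)`. -/
noncomputable def per (M : A) (σ : HB.H.obj M) (ω : Module.Dual ↥K (HdR.H.obj M)) :
    PA A K HB HdR :=
  Submodule.Quotient.mk (Finsupp.single ⟨M, (σ, ω)⟩ 1)

/-- `P(M)`: the image of `H_B(M) ⊗_ℚ H_dR(M)^∨` in `P(A)`. -/
noncomputable def PM (M : A) : Submodule ↥K (PA A K HB HdR) :=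
  Submodule.span ↥K {x | ∃ σ ω, x = per A K HB HdR M σ ω}

/-- The `m`-th power `M^m` of an object. -/
noncomputable abbrev pow (M : A) (m : ℕ) : A := ⨁ (fun _ : Fin m => M)

/-- The free `K`-module on symbols `σ ⊗ ω` for a single object `M`,
of which `H_B(M) ⊗_ℚ H_dR(M)^∨` is the quotient by the bilinearity relations. -/
abbrev FreeModM (M : A) := ((HB.H.obj M) × Module.Dual ↥K (HdR.H.obj M)) →₀ ↥K

/-- Generators of the relations defining `P^k(M)` (`k ∈ ℕ ∪ {∞}`, encoded as `k : ℕ∞`):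
bilinearity relations together with the depth `≤ k` relations `∑_{i=1}^m σ_i ⊗ ω_i = 0`
for every exact sequence `0 → N' → M^m → N → 0` with `m ≤ k`, `(σ_i) ∈ H_B(N')` and
`(ω_i) ∈ H_dR(N)^∨`. -/
def RelGenDepth (M : A) (k : ℕ∞) (x : FreeModM A K HB HdR M) : Prop :=
  (∃ (σ σ' : HB.H.obj M) (ω : Module.Dual ↥K (HdR.H.obj M)),
      x = Finsupp.single (σ + σ', ω) 1 - Finsupp.single (σ, ω) 1 - Finsupp.single (σ', ω) 1) ∨
  (∃ (σ : HB.H.obj M) (ω ω' : Module.Dual ↥K (HdR.H.obj M)),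
      x = Finsupp.single (σ, ω + ω') 1 - Finsupp.single (σ, ω) 1 - Finsupp.single (σ, ω') 1) ∨
  (∃ (q : ℚ) (σ : HB.H.obj M) (ω : Module.Dual ↥K (HdR.H.obj M)),
      x = Finsupp.single (q • σ, ω) 1 - Finsupp.single (σ, ω) (algebraMap ℚ ↥K q)) ∨
  (∃ (c : ↥K) (σ : HB.H.obj M) (ω : Module.Dual ↥K (HdR.H.obj M)),
      x = Finsupp.single (σ, c • ω) 1 - Finsupp.single (σ, ω) c) ∨
  (∃ (m : ℕ), 1 ≤ m ∧ (m : ℕ∞) ≤ k ∧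
    ∃ (N' N : A) (f : N' ⟶ pow A M m) (g : pow A M m ⟶ N) (w : f ≫ g = 0),
      (ShortComplex.mk f g w).ShortExact ∧
      ∃ (s : HB.H.obj N') (ω' : Module.Dual ↥K (HdR.H.obj N)),
        x = ∑ j : Fin m,
          Finsupp.single
            (HB.H.map (f ≫ biproduct.π (fun _ : Fin m => M) j) s,
             ω'.comp (HdR.H.map (biproduct.ι (fun _ : Fin m => M) j ≫ g)).hom) 1)

/-- The submodule of relations defining `P^k(M)`. -/
noncomputable def PRelDepth (M : A) (k : ℕ∞) : Submodule ↥K (FreeModM A K HB HdR M) :=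
  Submodule.span ↥K {x | RelGenDepth A K HB HdR M k x}

/-- The space `P^k(M)` of formal periods of depth `k` of `M`; `P^∞(M)` is `PkM M ⊤`. -/
abbrev PkM (M : A) (k : ℕ∞) := FreeModM A K HB HdR M ⧸ PRelDepth A K HB HdR M k

/-- The canonical map from the free module on symbols `σ ⊗ ω` at `M` to the one on all
symbols `(σ ⊗ ω)_N`, inducing the canonical map `P^∞(M) → P(A)`. -/
noncomputable def toFree (M : A) : FreeModM A K HB HdR M →ₗ[↥K] FreeMod A K HB HdR :=
  Finsupp.lmapDomain ↥K ↥K (fun t => (⟨M, t⟩ : PIdx A K HB HdR))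


/-! ### Auxiliary lemmas -/

section ModuleAux

variable {k : Type} [Field k]

lemma mcomp_apply {X Y Z : ModuleCat.{0} k} (f : X ⟶ Y) (g : Y ⟶ Z) (x : X) :
    (f ≫ g) x = g (f x) := rfl

lemma mid_apply {X : ModuleCat.{0} k} (x : X) : (𝟙 X : X ⟶ X) x = x := rfl

lemma msum_apply {X Y : ModuleCat.{0} k} {ι : Type*} (s : Finset ι) (f : ι → (X ⟶ Y)) (x : X) :
    (∑ i ∈ s, f i) x = ∑ i ∈ s, f i x := by
  show (∑ i ∈ s, f i).hom x = _
  rw [ModuleCat.hom_sum, LinearMap.sum_apply]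

lemma mzero_apply {X Y : ModuleCat.{0} k} (x : X) : (0 : X ⟶ Y) x = 0 := rfl

/-- In a pushout square of modules over a field with `a` surjective,
the kernel of `k` is the image under `b` of the kernel of `a`. -/
lemma pushout_ker {X Y Z P : ModuleCat.{0} k} {a : Z ⟶ X} {b : Z ⟶ Y}
    {h : X ⟶ P} {kk : Y ⟶ P} (sq : IsPushout a b h kk) (ha : Function.Surjective a)
    (y : Y) (hy : kk y = 0) : ∃ z : Z, a z = 0 ∧ b z = y := by
  haveI : Module.Free k X := Module.Free.of_divisionRing k X
  haveI : Module.Projective k X := Module.Projective.of_free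
  obtain ⟨s, hs⟩ := a.hom.exists_rightInverse_of_surjective
    (LinearMap.range_eq_top.mpr ha)
  set W : Submodule k Y := Submodule.map b.hom (LinearMap.ker a.hom) with hW
  let k' : Y ⟶ ModuleCat.of k (Y ⧸ W) := ModuleCat.ofHom W.mkQ
  let h' : X ⟶ ModuleCat.of k (Y ⧸ W) := ModuleCat.ofHom (W.mkQ.comp (b.hom.comp s))
  have comm : a ≫ h' = b ≫ k' := by
    ext z
    show W.mkQ (b (s (a z))) = W.mkQ (b z)
    rw [Submodule.mkQ_apply, Submodule.mkQ_apply, Submodule.Quotient.eq]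
    have hmem : s (a z) - z ∈ LinearMap.ker a.hom := by
      rw [LinearMap.mem_ker, map_sub]
      have : a (s (a z)) = a z := congrFun (congrArg (fun (t : X →ₗ[k] X) => ⇑t) hs) (a z)
      rw [this, sub_self]
    have : b (s (a z)) - b z = b (s (a z) - z) := by rw [map_sub]
    rw [this]
    exact Submodule.mem_map_of_mem hmem
  have h0 : k' y = 0 := by
    have hd := sq.inr_desc h' k' comm
    have : k' y = (kk ≫ sq.desc h' k' comm) y := by rw [hd]
    rw [this, mcomp_apply, hy, map_zero]
  have hyW : y ∈ W := by
    rw [show k' y = Submodule.Quotient.mk y from rfl, Submodule.Quotient.mk_eq_zero] at h0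
    exact h0
  obtain ⟨z, hz1, hz2⟩ := hyW
  exact ⟨z, hz1, hz2⟩

/-- In a pushout square of modules with `a` surjective, `k` is surjective. -/
lemma pushout_surj {X Y Z P : ModuleCat.{0} k} {a : Z ⟶ X} {b : Z ⟶ Y}
    {h : X ⟶ P} {kk : Y ⟶ P} (sq : IsPushout a b h kk) (ha : Function.Surjective a) :
    Function.Surjective kk := by
  rw [← ModuleCat.epi_iff_surjective]
  haveI : Epi a := (ModuleCat.epi_iff_surjective a).mpr ha
  constructor
  intro T φ ψ weq
  apply sq.hom_ext ?_ weq
  have : a ≫ h ≫ φ = a ≫ h ≫ ψ := by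
    rw [← Category.assoc, sq.w, Category.assoc, weq, ← Category.assoc, ← sq.w, Category.assoc]
  exact (cancel_epi a).mp this

end ModuleAux

section PerAux

lemma perRel_zero (x : FreeMod A K HB HdR) (hx : RelGen A K HB HdR x) :
    (Submodule.Quotient.mk x : PA A K HB HdR) = 0 :=
  (Submodule.Quotient.mk_eq_zero _).mpr (Submodule.subset_span hx)

lemma per_add_left (M : A) (σ σ' : HB.H.obj M) (ω : Module.Dual ↥K (HdR.H.obj M)) :
    per A K HB HdR M (σ + σ') ω = per A K HB HdR M σ ω + per A K HB HdR M σ' ω := by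
  have h := perRel_zero A K HB HdR _ (Or.inl ⟨M, σ, σ', ω, rfl⟩)
  rw [Submodule.Quotient.mk_sub, Submodule.Quotient.mk_sub, sub_sub, sub_eq_zero] at h
  simpa only [per] using h

lemma per_zero_left (M : A) (ω : Module.Dual ↥K (HdR.H.obj M)) :
    per A K HB HdR M 0 ω = 0 := by
  have h := per_add_left A K HB HdR M 0 0 ω
  rw [add_zero] at h
  exact (add_eq_right.mp h.symm)

lemma per_sum_left {ι : Type} (s : Finset ι) (M : A) (σ : ι → HB.H.obj M)
    (ω : Module.Dual ↥K (HdR.H.obj M)) :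
    per A K HB HdR M (∑ i ∈ s, σ i) ω = ∑ i ∈ s, per A K HB HdR M (σ i) ω := by
  classical
  induction s using Finset.induction_on with
  | empty => simpa using per_zero_left A K HB HdR M ω
  | insert _ _ hni ih =>
      rw [Finset.sum_insert hni, Finset.sum_insert hni, per_add_left, ih]

lemma per_map {M N : A} (α : M ⟶ N) (σ : HB.H.obj M) (ω : Module.Dual ↥K (HdR.H.obj N)) :
    per A K HB HdR M σ (ω.comp (HdR.H.map α).hom) = per A K HB HdR N (HB.H.map α σ) ω := by
  have h := perRel_zero A K HB HdR _
    (Or.inr (Or.inr (Or.inr (Or.inr ⟨M, N, α, σ, ω, rfl⟩))))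
  rw [Submodule.Quotient.mk_sub, sub_eq_zero] at h
  simpa only [per] using h

lemma per_mem (M : A) (σ : HB.H.obj M) (ω : Module.Dual ↥K (HdR.H.obj M)) :
    per A K HB HdR M σ ω ∈ PM A K HB HdR M :=
  Submodule.subset_span ⟨σ, ω, rfl⟩

lemma PM_le_of_surjective {N M' : A} (p : N ⟶ M')
    (hs : Function.Surjective (HB.H.map p)) :
    PM A K HB HdR M' ≤ PM A K HB HdR N := by
  rw [PM, Submodule.span_le]
  rintro x ⟨σ, ω, rfl⟩
  obtain ⟨σ', rfl⟩ := hs σ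
  rw [← per_map]
  exact per_mem A K HB HdR N σ' _

lemma PM_le_of_injective {N M' : A} (i : N ⟶ M')
    (hi : Function.Injective (HdR.H.map i)) :
    PM A K HB HdR N ≤ PM A K HB HdR M' := by
  obtain ⟨g, hg⟩ := LinearMap.exists_leftInverse_of_injective (HdR.H.map i).hom
    (LinearMap.ker_eq_bot.mpr hi)
  rw [PM, Submodule.span_le]
  rintro x ⟨σ, ω, rfl⟩
  have hω : ω = (ω.comp g).comp (HdR.H.map i).hom := by
    rw [LinearMap.comp_assoc, hg, LinearMap.comp_id]
  rw [hω, per_map]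
  exact per_mem A K HB HdR M' _ _

end PerAux

section PowAux

lemma PM_pow_le (M : A) (m : ℕ) :
    PM A K HB HdR (pow A M m) ≤ PM A K HB HdR M := by
  haveI := HB.additive
  rw [PM, Submodule.span_le]
  rintro x ⟨σ, ω, rfl⟩
  have htot : σ = ∑ j : Fin m,
      HB.H.map (biproduct.π (fun _ : Fin m => M) j ≫ biproduct.ι (fun _ : Fin m => M) j) σ := by
    have h1 : (𝟙 (pow A M m)) = ∑ j : Fin m,
        biproduct.π (fun _ : Fin m => M) j ≫ biproduct.ι (fun _ : Fin m => M) j :=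
      biproduct.total.symm
    have h2 : HB.H.map (𝟙 (pow A M m)) σ = σ := by rw [HB.H.map_id]; rfl
    calc σ = HB.H.map (𝟙 (pow A M m)) σ := h2.symm
      _ = _ := by rw [h1, HB.H.map_sum, msum_apply]
  rw [show per A K HB HdR (pow A M m) σ ω
      = per A K HB HdR (pow A M m) (∑ j : Fin m,
        HB.H.map (biproduct.π (fun _ : Fin m => M) j ≫ biproduct.ι (fun _ : Fin m => M) j) σ) ω
      from by rw [← htot]]
  rw [per_sum_left]
  apply Submodule.sum_mem
  intro j _
  have h3 : HB.H.map (biproduct.π (fun _ : Fin m => M) j ≫ biproduct.ι (fun _ : Fin m => M) j) σ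
      = HB.H.map (biproduct.ι (fun _ : Fin m => M) j) (HB.H.map (biproduct.π (fun _ : Fin m => M) j) σ) := by
    rw [HB.H.map_comp]; rfl
  rw [h3, ← per_map]
  exact per_mem A K HB HdR M _ _

lemma PM_le_pow (M : A) (m : ℕ) (hm : 1 ≤ m) :
    PM A K HB HdR M ≤ PM A K HB HdR (pow A M m) := by
  set j0 : Fin m := ⟨0, hm⟩
  have h1 : biproduct.ι (fun _ : Fin m => M) j0 ≫ biproduct.π (fun _ : Fin m => M) j0 = 𝟙 M :=
    biproduct.ι_π_self _ _
  have hinj : Function.Injective (HdR.H.map (biproduct.ι (fun _ : Fin m => M) j0)) := by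
    apply Function.LeftInverse.injective
      (g := HdR.H.map (biproduct.π (fun _ : Fin m => M) j0))
    intro x
    have : (HdR.H.map (biproduct.ι (fun _ : Fin m => M) j0)
        ≫ HdR.H.map (biproduct.π (fun _ : Fin m => M) j0)) x = x := by
      rw [← HdR.H.map_comp, h1, HdR.H.map_id]; rfl
    exact this
  exact PM_le_of_injective A K HB HdR _ hinj

end PowAux

set_option linter.unusedSectionVars false

section KeyInj

/-- Splitting of the trace map: the diagonal inclusion is a section. -/
lemma tr_section (M0 : A) (d : ℕ) (hd : 1 ≤ d)
    (tr : (⨁ fun _ : Fin d × Fin d => M0) ⟶ M0)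
    (htr : tr = biproduct.desc (fun p => if p.1 = p.2 then 𝟙 M0 else 0)) :
    biproduct.ι (fun _ : Fin d × Fin d => M0) (⟨0, hd⟩, ⟨0, hd⟩) ≫ tr = 𝟙 M0 := by
  rw [htr, biproduct.ι_desc]; simp

/-- The trace as a sum of diagonal projections. -/
lemma tr_eq_sum (M0 : A) (d : ℕ)
    (tr : (⨁ fun _ : Fin d × Fin d => M0) ⟶ M0)
    (htr : tr = biproduct.desc (fun p => if p.1 = p.2 then 𝟙 M0 else 0)) :
    tr = ∑ i : Fin d, biproduct.π (fun _ : Fin d × Fin d => M0) (i, i) := by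
  classical
  apply biproduct.hom_ext'
  rintro ⟨p1, p2⟩
  rw [htr, biproduct.ι_desc, Preadditive.comp_sum]
  by_cases hp : p1 = p2
  · subst hp
    rw [if_pos rfl]
    symm
    trans (biproduct.ι (fun _ : Fin d × Fin d => M0) (p1, p1) ≫
      biproduct.π (fun _ : Fin d × Fin d => M0) (p1, p1))
    · exact Fintype.sum_eq_single p1
        (fun b hb => biproduct.ι_π_ne _ (fun hc => hb (congrArg Prod.fst hc).symm))
    · exact biproduct.ι_π_self _ _
  · rw [if_neg hp]
    symm
    apply Finset.sum_eq_zero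
    intro i _
    exact biproduct.ι_π_ne _
      (fun hc => hp ((congrArg Prod.fst hc).trans (congrArg Prod.snd hc).symm))

/-- The column extraction maps `q k : M0^{d×d} → M0^d` intertwine `u` with `f`. -/
lemma col_comm (M0 M : A) (d : ℕ)
    (f : pow A M0 d ⟶ M)
    (u : (⨁ fun _ : Fin d × Fin d => M0) ⟶ pow A M d)
    (hu : u = biproduct.matrix (fun p j =>
      if p.2 = j then (biproduct.ι (fun _ : Fin d => M0) p.1 ≫ f) else 0))
    (kk : Fin d) :
    u ≫ biproduct.π (fun _ : Fin d => M) kk =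
      biproduct.lift (fun i => biproduct.π (fun _ : Fin d × Fin d => M0) (i, kk)) ≫ f := by
  classical
  apply biproduct.hom_ext'
  rintro ⟨p1, p2⟩
  have hpq : biproduct.ι (fun _ : Fin d × Fin d => M0) (p1, p2) ≫
      biproduct.lift (fun i => biproduct.π (fun _ : Fin d × Fin d => M0) (i, kk)) =
      (if p2 = kk then biproduct.ι (fun _ : Fin d => M0) p1 else 0) := by
    apply biproduct.hom_ext
    intro i
    rw [Category.assoc, biproduct.lift_π]
    by_cases hk : p2 = kk
    · subst hk
      rw [if_pos rfl]
      by_cases hi : p1 = i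
      · subst hi
        rw [biproduct.ι_π_self, biproduct.ι_π_self]
      · rw [biproduct.ι_π_ne _ (fun hc => hi (congrArg Prod.fst hc)),
          biproduct.ι_π_ne _ hi]
    · rw [if_neg hk, zero_comp,
        biproduct.ι_π_ne _ (fun hc => hk (congrArg Prod.snd hc))]
  rw [hu, ← Category.assoc, ← Category.assoc, hpq, biproduct.ι_matrix, biproduct.lift_π]
  split_ifs with hk
  · rfl
  · rw [zero_comp]

/-- Key injectivity: the canonical map `M → M̃^d` is injective after applying an exact
fiber functor. -/
lemma key_inj {k : Type} [Field k] (F : A ⥤ ModuleCat.{0} k) [F.Additive]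
    [PreservesFiniteLimits F] [PreservesFiniteColimits F]
    (M0 M : A) (d : ℕ) (hd : 1 ≤ d)
    (f : pow A M0 d ⟶ M) [Mono f]
    (tr : (⨁ fun _ : Fin d × Fin d => M0) ⟶ M0)
    (htr : tr = biproduct.desc (fun p => if p.1 = p.2 then 𝟙 M0 else 0))
    (u : (⨁ fun _ : Fin d × Fin d => M0) ⟶ pow A M d)
    (hu : u = biproduct.matrix (fun p j =>
      if p.2 = j then (biproduct.ι (fun _ : Fin d => M0) p.1 ≫ f) else 0)) :
    Function.Injective (F.map (biproduct.lift
      (fun j : Fin d => biproduct.ι (fun _ : Fin d => M) j ≫ pushout.inr tr u))) := by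
  classical
  set c : M ⟶ pow A (pushout tr u) d := biproduct.lift
      (fun j : Fin d => biproduct.ι (fun _ : Fin d => M) j ≫ pushout.inr tr u) with hc
  suffices hker0 : ∀ x : F.obj M, F.map c x = 0 → x = 0 by
    intro x₁ x₂ hx
    have h1 : F.map c (x₁ - x₂) = 0 := by rw [map_sub, hx, sub_self]
    exact sub_eq_zero.mp (hker0 _ h1)
  intro x hx0
  have sq : IsPushout (F.map tr) (F.map u) (F.map (pushout.inl tr u))
      (F.map (pushout.inr tr u)) := (IsPushout.of_hasPushout tr u).map F
  have hatr : Function.Surjective (F.map tr) := by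
    intro y
    refine ⟨F.map (biproduct.ι (fun _ : Fin d × Fin d => M0) (⟨0, hd⟩, ⟨0, hd⟩)) y, ?_⟩
    rw [← mcomp_apply, ← F.map_comp, tr_section A M0 d hd tr htr, F.map_id, mid_apply]
  have hcomp : ∀ j : Fin d, F.map (pushout.inr tr u)
      (F.map (biproduct.ι (fun _ : Fin d => M) j) x) = 0 := by
    intro j
    have e1 : c ≫ biproduct.π (fun _ : Fin d => pushout tr u) j =
        biproduct.ι (fun _ : Fin d => M) j ≫ pushout.inr tr u := biproduct.lift_π _ _
    calc F.map (pushout.inr tr u) (F.map (biproduct.ι (fun _ : Fin d => M) j) x)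
        = F.map (biproduct.ι (fun _ : Fin d => M) j ≫ pushout.inr tr u) x := by
          rw [F.map_comp, mcomp_apply]
      _ = F.map (c ≫ biproduct.π (fun _ : Fin d => pushout tr u) j) x := by rw [e1]
      _ = F.map (biproduct.π (fun _ : Fin d => pushout tr u) j) (F.map c x) := by
          rw [F.map_comp, mcomp_apply]
      _ = 0 := by rw [hx0, map_zero]
  have hz : ∀ j : Fin d, ∃ z, F.map tr z = 0 ∧
      F.map u z = F.map (biproduct.ι (fun _ : Fin d => M) j) x :=
    fun j => pushout_ker sq hatr _ (hcomp j)
  choose z hz1 hz2 using hz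
  set q : Fin d → ((⨁ fun _ : Fin d × Fin d => M0) ⟶ pow A M0 d) :=
    fun kk => biproduct.lift (fun i => biproduct.π (fun _ : Fin d × Fin d => M0) (i, kk))
    with hqdef
  have hfinj : Function.Injective (F.map f) :=
    (ModuleCat.mono_iff_injective (F.map f)).mp (F.map_mono f)
  have hval : ∀ j kk : Fin d, F.map f (F.map (q kk) (z j)) = if j = kk then x else 0 := by
    intro j kk
    have e1 : F.map f (F.map (q kk) (z j)) =
        F.map (biproduct.π (fun _ : Fin d => M) kk) (F.map u (z j)) := by
      rw [← mcomp_apply, ← mcomp_apply, ← F.map_comp, ← F.map_comp,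
        col_comm A M0 M d f u hu kk]
    rw [e1, hz2 j, ← mcomp_apply, ← F.map_comp]
    by_cases hkj : j = kk
    · subst hkj
      rw [biproduct.ι_π_self, F.map_id, if_pos rfl, mid_apply]
    · rw [biproduct.ι_π_ne _ hkj, if_neg hkj, F.map_zero, mzero_apply]
  have hzero : ∀ j i : Fin d, i ≠ j → F.map (q i) (z j) = 0 := by
    intro j i hij
    apply hfinj
    rw [hval j i, if_neg (fun hc => hij hc.symm), map_zero]
  have hqe : ∀ i kk : Fin d, q kk ≫ biproduct.π (fun _ : Fin d => M0) i =
      biproduct.π (fun _ : Fin d × Fin d => M0) (i, kk) := fun i kk => biproduct.lift_π _ _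
  have hdiag : ∀ j : Fin d,
      F.map (biproduct.π (fun _ : Fin d => M0) j) (F.map (q j) (z j)) = 0 := by
    intro j
    have h0 : F.map tr (z j) = 0 := hz1 j
    rw [tr_eq_sum A M0 d tr htr, F.map_sum, msum_apply] at h0
    have e2 : ∀ i : Fin d, F.map (biproduct.π (fun _ : Fin d × Fin d => M0) (i, i)) (z j)
        = F.map (biproduct.π (fun _ : Fin d => M0) i) (F.map (q i) (z j)) := by
      intro i
      rw [← mcomp_apply, ← F.map_comp, hqe]
    rw [Finset.sum_congr rfl (fun i _ => e2 i)] at h0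
    rwa [Finset.sum_eq_single_of_mem j (Finset.mem_univ _)
      (fun i _ hij => by rw [hzero j i hij, map_zero])] at h0
  have hveq : ∀ j : Fin d, F.map (q j) (z j) = F.map (q ⟨0, hd⟩) (z ⟨0, hd⟩) := by
    intro j
    apply hfinj
    rw [hval j j, if_pos rfl, hval _ _, if_pos rfl]
  set v : F.obj (pow A M0 d) := F.map (q ⟨0, hd⟩) (z ⟨0, hd⟩) with hv
  have hcompzero : ∀ i : Fin d, F.map (biproduct.π (fun _ : Fin d => M0) i) v = 0 := by
    intro i
    rw [← hveq i]
    exact hdiag i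
  have hv0 : v = 0 := by
    have htot : F.map (𝟙 (pow A M0 d)) v = v := by rw [F.map_id, mid_apply]
    rw [← biproduct.total, F.map_sum, msum_apply] at htot
    rw [← htot]
    apply Finset.sum_eq_zero
    intro i _
    rw [F.map_comp, mcomp_apply, hcompzero i, map_zero]
  have hx : x = F.map f v := by
    have := hval ⟨0, hd⟩ ⟨0, hd⟩
    rw [if_pos rfl] at this
    exact this.symm
  rw [hx, hv0, map_zero]

end KeyInj
/-- **Proposition (`PROPBASICPROP` 4).** Let `X ≠ 0` and `L` be finite-dimensional
`ℚ`-vector spaces; fixing bases we take `X = ℚ^d` (`d ≥ 1`) and `L = ℚ^e`, so that for an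
object `N` the copowers are `N ⊗ X = N^d`, `N ⊗ X ⊗ X^∨ = N^{d×d}`, `N ⊗ L = N^e`.
Given an exact sequence `0 → M_0 ⊗ X → M → M_1 ⊗ L → 0`, let `M̃` be the pushout of
`M ⊗ X^∨` along the trace `tr : M_0 ⊗ X ⊗ X^∨ → M_0`, i.e. the pushout of the span
formed by `tr` and the inclusion `M_0 ⊗ X ⊗ X^∨ → M ⊗ X^∨` (so that `M̃` sits in an exact
sequence `0 → M_0 → M̃ → M_1 ⊗ Hom(X, L) → 0`). Then `P(M) = P(M̃)` in `P(A)`. -/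
theorem PM_eq_PM_pushout (M0 M1 M : A) (d e : ℕ) (hd : 1 ≤ d)
    (f : pow A M0 d ⟶ M) (g : M ⟶ pow A M1 e) (w : f ≫ g = 0)
    (hse : (ShortComplex.mk f g w).ShortExact)
    (tr : (⨁ fun _ : Fin d × Fin d => M0) ⟶ M0)
    (htr : tr = biproduct.desc (fun p => if p.1 = p.2 then 𝟙 M0 else 0))
    (u : (⨁ fun _ : Fin d × Fin d => M0) ⟶ pow A M d)
    (hu : u = biproduct.matrix (fun p j =>
      if p.2 = j then (biproduct.ι (fun _ : Fin d => M0) p.1 ≫ f) else 0)) :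
    PM A K HB HdR M = PM A K HB HdR (pushout tr u) := by
  classical
  haveI := HB.additive
  haveI := HdR.additive
  haveI := HB.exact_left
  haveI := HB.exact_right
  haveI := HdR.exact_left
  haveI := HdR.exact_right
  haveI : Mono f := hse.mono_f
  have sqB := (IsPushout.of_hasPushout tr u).map HB.H
  have hatr : Function.Surjective (HB.H.map tr) := by
    intro y
    refine ⟨HB.H.map (biproduct.ι (fun _ : Fin d × Fin d => M0) (⟨0, hd⟩, ⟨0, hd⟩)) y, ?_⟩
    rw [← mcomp_apply, ← HB.H.map_comp, tr_section A M0 d hd tr htr, HB.H.map_id, mid_apply]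
  have hsurj : Function.Surjective (HB.H.map (pushout.inr tr u)) := pushout_surj sqB hatr
  have hinj := key_inj A HdR.H M0 M d hd f tr htr u hu
  apply le_antisymm
  · calc PM A K HB HdR M
        ≤ PM A K HB HdR (pow A (pushout tr u) d) :=
          PM_le_of_injective A K HB HdR _ hinj
      _ ≤ PM A K HB HdR (pushout tr u) := PM_pow_le A K HB HdR _ d
  · calc PM A K HB HdR (pushout tr u)
        ≤ PM A K HB HdR (pow A M d) := PM_le_of_surjective A K HB HdR _ hsurj
      _ ≤ PM A K HB HdR M := PM_pow_le A K HB HdR M d
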